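/- Let G be a 2-edge-connected graph on n ≥ 3 vertices with vertices u, w. Then there exist two paths P, P' from u to w such that E(P) ∩ E(P') = ∅, and the subgraph induced by E(P) ∪ E(P') has at most (3/2)(n−1) edges. -/

import Mathlib

open scoped BigOperators

/-- The length of an edge (as an unordered pair) under a labelling `α`. -/
noncomputable def edgeLen {V : Type*} (α : V → ℕ) : Sym2 V → ℕ :=
  Sym2.lift ⟨fun u v => ((α u : ℤ) - (α v : ℤ)).natAbs,
    fun u v => by simp only []; rw [show (α u:ℤ) - α v = -((α v:ℤ) - α u) by ring, Int.natAbs_neg]⟩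

/-- The net cost of a labelling `α` of the graph `G`. -/
noncomputable def netCost {V : Type*} (G : SimpleGraph V) (α : V → ℕ) : ℕ :=
  ∑ᶠ e ∈ G.edgeSet, (edgeLen α e - 1)

/-- A linear arrangement of `G`, viewed as map to `{1, …, n}`. -/
noncomputable def arr {V : Type*} [Finite V] (α : V ≃ Fin (Nat.card V)) (v : V) : ℕ :=
  (α v : ℕ) + 1

/-- `ola⁺(G)`: minimum net cost of a linear arrangement of `G`. -/
noncomputable def olaPlus {V : Type*} [Finite V] (G : SimpleGraph V) : ℕ :=
  sInf {c : ℕ | ∃ α : V ≃ Fin (Nat.card V), netCost G (arr α) = c}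


section Helpers
open SimpleGraph Walk List
variable {V : Type*} {G : SimpleGraph V} [DecidableEq V]

private lemma end_mem_tail_support {a b : V} (p : G.Walk a b) (hp : 0 < p.length) :
    b ∈ p.support.tail := by
  cases p with
  | nil => simp at hp
  | cons h q => simpa using q.end_mem_support

private lemma mem_support_rotate [DecidableEq V] {y z x : V} (c : G.Walk y y) (hz : z ∈ c.support)
    (hx : x ∈ c.support) (hne : 0 < c.length) : x ∈ (c.rotate z hz).support := by
  rw [(c.rotate z hz).support_eq_cons]
  by_cases hxz : x = z
  · simp [hxz]
  · right
    refine ((support_rotate c z hz).mem_iff).mpr ?_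
    rw [c.support_eq_cons, List.mem_cons] at hx
    rcases hx with hx | hx
    · subst hx; exact end_mem_tail_support c hne
    · exact hx

private lemma exists_first_meet [DecidableEq V] {z y : V} (R : G.Walk z y) (hR : R.IsPath)
    (S : Set V) [DecidablePred (· ∈ S)] (hy : y ∈ S) :
    ∃ (p : V) (R1 : G.Walk z p), R1.IsPath ∧ p ∈ S ∧ R1.edges ⊆ R.edges ∧
      R1.support ⊆ R.support ∧ (∀ v ∈ R1.support, v ∈ S → v = p) := by
  induction R with
  | nil =>
    exact ⟨_, Walk.nil, Walk.IsPath.nil, hy, by simp, by simp, by simp⟩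
  | @cons a c y h q ih =>
    by_cases haS : a ∈ S
    · exact ⟨a, Walk.nil, Walk.IsPath.nil, haS, by simp, by simp, by simp⟩
    · obtain ⟨p, R1, hR1path, hpS, hedges, hsupp, hfirst⟩ := ih (hR.of_cons) hy
      refine ⟨p, Walk.cons h R1, ?_, hpS, ?_, ?_, ?_⟩
      · rw [Walk.cons_isPath_iff]
        exact ⟨hR1path, fun hc => ((Walk.cons_isPath_iff h q).mp hR).2 (hsupp hc)⟩
      · intro e he
        rw [Walk.edges_cons] at he ⊢
        rcases List.mem_cons.mp he with h1 | h1
        · exact List.mem_cons.mpr (Or.inl h1)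
        · exact List.mem_cons.mpr (Or.inr (hedges h1))
      · intro v hv
        rw [Walk.support_cons] at hv ⊢
        rcases List.mem_cons.mp hv with h1 | h1
        · exact List.mem_cons.mpr (Or.inl h1)
        · exact List.mem_cons.mpr (Or.inr (hsupp h1))
      · intro v hv hvS
        rw [Walk.support_cons, List.mem_cons] at hv
        rcases hv with h1 | h1
        · exact absurd (h1 ▸ hvS) haS
        · exact hfirst v h1 hvS

private lemma closed_trail_step [DecidableEq V]
    (hb : ∀ a b : V, ¬ G.IsBridge s(a, b)) {x y z : V} (hyz : G.Adj y z)
    (c : G.Walk y y) (hc : c.IsTrail) (hx : x ∈ c.support) :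
    ∃ c' : G.Walk z z, c'.IsTrail ∧ x ∈ c'.support := by
  by_cases hz : z ∈ c.support
  · have hne : 0 < c.length := by
      cases c with
      | nil =>
        simp only [Walk.support_nil, List.mem_singleton] at hz
        exact absurd hz.symm (G.ne_of_adj hyz)
      | cons h q => simp [Nat.succ_pos]
    exact ⟨c.rotate z hz, hc.rotate hz, mem_support_rotate c hz hx hne⟩
  · have hreach : (G \ SimpleGraph.fromEdgeSet {s(y, z)}).Reachable y z := by
      have h1 := hb y z
      rw [SimpleGraph.isBridge_iff] at h1
      tauto
    obtain ⟨R0, hR0e⟩ := SimpleGraph.reachable_delete_edges_iff_exists_walk.mp hreach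
    set R := R0.reverse.bypass with hRdef
    have hRpath : R.IsPath := R0.reverse.bypass_isPath
    have hRe : s(y, z) ∉ R.edges := fun hmem => hR0e (by
      have h2 := R0.reverse.edges_bypass_subset hmem
      rwa [Walk.edges_reverse, List.mem_reverse] at h2)
    obtain ⟨p, R1, hR1path, hpS, hedges, hsupp, hfirst⟩ :=
      exists_first_meet R hRpath {v | v ∈ c.support} (by simpa using c.end_mem_support)
    have hpS' : p ∈ c.support := hpS
    have hR1e : s(y, z) ∉ R1.edges := fun h => hRe (hedges h)
    have hdisj : ∀ f ∈ R1.edges, f ∉ c.edges := by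
      intro f hf1 hfc
      revert hf1 hfc
      refine Sym2.ind (fun a b hf1 hfc => ?_) f
      have ha1 : a ∈ R1.support := R1.fst_mem_support_of_mem_edges hf1
      have hb1 : b ∈ R1.support := R1.snd_mem_support_of_mem_edges hf1
      have hac : a ∈ c.support := c.fst_mem_support_of_mem_edges hfc
      have hbc : b ∈ c.support := c.snd_mem_support_of_mem_edges hfc
      have hadj : G.Adj a b := R1.adj_of_mem_edges hf1
      rw [hfirst a ha1 hac, hfirst b hb1 hbc] at hadj
      exact (G.ne_of_adj hadj) rfl
    have hyzc : s(y, z) ∉ c.edges := fun h => hz (c.snd_mem_support_of_mem_edges h)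
    have hx' : x ∈ (c.takeUntil p hpS').support ∨ x ∈ (c.dropUntil p hpS').support :=
      (Walk.mem_support_append_iff _ _).mp (by rw [Walk.take_spec]; exact hx)
    have hR1revnodup : R1.reverse.edges.Nodup := by
      rw [Walk.edges_reverse]
      exact List.nodup_reverse.mpr hR1path.isTrail.edges_nodup
    rcases hx' with hxT | hxT
    · refine ⟨Walk.cons hyz.symm ((c.takeUntil p hpS').append R1.reverse), ?_, ?_⟩
      · rw [Walk.isTrail_cons]
        constructor
        · rw [Walk.isTrail_def, Walk.edges_append, List.nodup_append]
          refine ⟨(hc.takeUntil hpS').edges_nodup, hR1revnodup, ?_⟩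
          intro f hf f' hf2 hff
          subst hff
          rw [Walk.edges_reverse, List.mem_reverse] at hf2
          exact hdisj f hf2 (c.edges_takeUntil_subset hpS' hf)
        · rw [Walk.edges_append, List.mem_append]
          rintro (h1 | h1)
          · rw [Sym2.eq_swap] at h1
            exact hyzc (c.edges_takeUntil_subset hpS' h1)
          · rw [Walk.edges_reverse, List.mem_reverse, Sym2.eq_swap] at h1
            exact hR1e h1
      · rw [Walk.support_cons, List.mem_cons]
        right
        exact (Walk.mem_support_append_iff _ _).mpr (Or.inl hxT)
    · refine ⟨Walk.cons hyz.symm ((c.dropUntil p hpS').reverse.append R1.reverse), ?_, ?_⟩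
      · rw [Walk.isTrail_cons]
        constructor
        · rw [Walk.isTrail_def, Walk.edges_append, List.nodup_append]
          refine ⟨((hc.dropUntil hpS').reverse _).edges_nodup, hR1revnodup, ?_⟩
          intro f hf f' hf2 hff
          subst hff
          rw [Walk.edges_reverse, List.mem_reverse] at hf2
          rw [Walk.edges_reverse, List.mem_reverse] at hf
          exact hdisj f hf2 (c.edges_dropUntil_subset hpS' hf)
        · rw [Walk.edges_append, List.mem_append]
          rintro (h1 | h1)
          · rw [Walk.edges_reverse, List.mem_reverse, Sym2.eq_swap] at h1
            exact hyzc (c.edges_dropUntil_subset hpS' h1)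
          · rw [Walk.edges_reverse, List.mem_reverse, Sym2.eq_swap] at h1
            exact hR1e h1
      · rw [Walk.support_cons, List.mem_cons]
        right
        refine (Walk.mem_support_append_iff _ _).mpr (Or.inl ?_)
        rw [Walk.support_reverse, List.mem_reverse]
        exact hxT

private lemma closed_trail_extend [DecidableEq V]
    (hb : ∀ a b : V, ¬ G.IsBridge s(a, b)) {x : V} :
    ∀ {a b : V} (_ : G.Walk a b) (c : G.Walk a a), c.IsTrail → x ∈ c.support →
      ∃ c' : G.Walk b b, c'.IsTrail ∧ x ∈ c'.support := by
  intro a b q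
  induction q with
  | nil => exact fun c hc hx => ⟨c, hc, hx⟩
  | cons h p ih =>
    intro c hc hx
    obtain ⟨c2, hc2, hx2⟩ := closed_trail_step hb h c hc hx
    exact ih c2 hc2 hx2

private lemma exists_two_disjoint_walks [DecidableEq V]
    (hb : ∀ a b : V, ¬ G.IsBridge s(a, b)) {u w : V} (h : G.Reachable u w) :
    ∃ p q : G.Walk u w, ∀ e ∈ p.edges, e ∉ q.edges := by
  obtain ⟨q0⟩ := h
  obtain ⟨c, hc, hu⟩ := closed_trail_extend hb (x := u) q0 (Walk.nil : G.Walk u u) Walk.IsTrail.nil (by simp)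
  refine ⟨(c.takeUntil u hu).reverse, c.dropUntil u hu, ?_⟩
  have hnodup : ((c.takeUntil u hu).edges ++ (c.dropUntil u hu).edges).Nodup := by
    rw [← Walk.edges_append, Walk.take_spec]
    exact hc.edges_nodup
  have hdisj := List.disjoint_of_nodup_append hnodup
  intro e he
  rw [Walk.edges_reverse, List.mem_reverse] at he
  exact hdisj he

private lemma support_concat'' {a x : V} (q : G.Walk a x) :
    q.support = q.support.reverse.tail.reverse ++ [x] := by
  have h := q.reverse.support_eq_cons
  rw [Walk.support_reverse] at h
  have h2 := congrArg List.reverse h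
  rwa [List.reverse_reverse, List.reverse_cons] at h2

private lemma indexOf_end {a x : V} {q : G.Walk a x} (hq : q.IsPath) :
    q.support.idxOf x = q.length := by
  have h := support_concat'' q
  have hnodup : q.support.Nodup := hq.support_nodup
  conv_lhs => rw [h]
  rw [h] at hnodup
  have hxnot : x ∉ q.support.reverse.tail.reverse := by
    rcases List.nodup_append.mp hnodup with ⟨-, -, hd⟩
    intro hx
    exact hd _ hx _ (List.mem_singleton_self x) rfl
  rw [List.idxOf_append_of_notMem hxnot, List.idxOf_cons_self]
  have hlen : q.support.length = q.length + 1 := q.length_support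
  have h9 : q.support.length = q.support.reverse.tail.reverse.length + 1 := by
    conv_lhs => rw [h]
    simp
  omega

private lemma indexOf_takeUntil_length {a b x : V} {p : G.Walk a b} (hp : p.IsPath)
    (hx : x ∈ p.support) : p.support.idxOf x = (p.takeUntil x hx).length := by
  have hsplit : p.support = (p.takeUntil x hx).support ++ (p.dropUntil x hx).support.tail := by
    have := Walk.support_append (p.takeUntil x hx) (p.dropUntil x hx)
    rwa [Walk.take_spec] at this
  rw [hsplit, List.idxOf_append_of_mem (p.takeUntil x hx).end_mem_support]
  exact indexOf_end (hp.takeUntil hx)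

private lemma indexOf_mem_takeUntil {a b x v : V} {p : G.Walk a b} (hp : p.IsPath)
    (hx : x ∈ p.support) (hv : v ∈ (p.takeUntil x hx).support) :
    p.support.idxOf v = (p.takeUntil x hx).support.idxOf v := by
  have hsplit : p.support = (p.takeUntil x hx).support ++ (p.dropUntil x hx).support.tail := by
    have := Walk.support_append (p.takeUntil x hx) (p.dropUntil x hx)
    rwa [Walk.take_spec] at this
  rw [hsplit, List.idxOf_append_of_mem hv]

private lemma indexOf_mem_dropUntil {a b x v : V} {p : G.Walk a b} (hp : p.IsPath)
    (hx : x ∈ p.support) (hv : v ∈ (p.dropUntil x hx).support) :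
    p.support.idxOf v = p.support.idxOf x + (p.dropUntil x hx).support.idxOf v := by
  have hsplit : p.support = (p.takeUntil x hx).support ++ (p.dropUntil x hx).support.tail := by
    have := Walk.support_append (p.takeUntil x hx) (p.dropUntil x hx)
    rwa [Walk.take_spec] at this
  have hnodup : p.support.Nodup := hp.support_nodup
  rw [hsplit] at hnodup
  have hDcons := (p.dropUntil x hx).support_eq_cons
  by_cases hvx : v = x
  · subst hvx
    have h8 : (p.dropUntil v hx).support.idxOf v = 0 := by
      conv_lhs => rw [hDcons]
      exact List.idxOf_cons_self
    rw [h8, Nat.add_zero]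
  · have hvtail : v ∈ (p.dropUntil x hx).support.tail := by
      rw [hDcons] at hv
      rcases List.mem_cons.mp hv with h1 | h1
      · exact absurd h1 hvx
      · exact h1
    have hvnotT : v ∉ (p.takeUntil x hx).support := by
      rcases List.nodup_append.mp hnodup with ⟨-, -, hd⟩
      intro hvT
      exact hd _ hvT _ hvtail rfl
    have h8 : (p.dropUntil x hx).support.idxOf v
        = (p.dropUntil x hx).support.tail.idxOf v + 1 := by
      conv_lhs => rw [hDcons]
      rw [List.idxOf_cons_ne _ (fun h => hvx h.symm)]
    have h1 : (p.takeUntil x hx).support.length = (p.takeUntil x hx).length + 1 :=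
      (p.takeUntil x hx).length_support
    have h2 : p.support.idxOf x = (p.takeUntil x hx).length := indexOf_takeUntil_length hp hx
    rw [hsplit] at h2 ⊢
    rw [List.idxOf_append_of_notMem hvnotT]
    omega

private lemma mem_dropUntil_iff_le_indexOf {a b x v : V} {p : G.Walk a b} (hp : p.IsPath)
    (hx : x ∈ p.support) (hv : v ∈ p.support) :
    v ∈ (p.dropUntil x hx).support ↔ p.support.idxOf x ≤ p.support.idxOf v := by
  constructor
  · intro h
    rw [indexOf_mem_dropUntil hp hx h]
    omega
  · intro h
    have hsplit : p.support = (p.takeUntil x hx).support ++ (p.dropUntil x hx).support.tail := by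
      have := Walk.support_append (p.takeUntil x hx) (p.dropUntil x hx)
      rwa [Walk.take_spec] at this
    have hv' := hv
    rw [hsplit, List.mem_append] at hv'
    rcases hv' with h1 | h1
    · -- v in takeUntil; then idx v ≤ idx x so idx v = idx x so v = x
      have h2 : p.support.idxOf v = (p.takeUntil x hx).support.idxOf v :=
        indexOf_mem_takeUntil hp hx h1
      have h3 : (p.takeUntil x hx).support.idxOf v < (p.takeUntil x hx).support.length :=
        List.idxOf_lt_length_iff.mpr h1
      have h4 : (p.takeUntil x hx).support.length = (p.takeUntil x hx).length + 1 :=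
        (p.takeUntil x hx).length_support
      have h5 : p.support.idxOf x = (p.takeUntil x hx).length := indexOf_takeUntil_length hp hx
      have h6 : p.support.idxOf v = p.support.idxOf x := by omega
      have h7 : v = x := (List.idxOf_inj hv).mp h6
      rw [h7]
      exact (p.dropUntil x hx).start_mem_support
    · rw [(p.dropUntil x hx).support_eq_cons]
      exact List.mem_cons.mpr (Or.inr h1)

private lemma mem_takeUntil_iff_le_indexOf {a b x v : V} {p : G.Walk a b} (hp : p.IsPath)
    (hx : x ∈ p.support) (hv : v ∈ p.support) :
    v ∈ (p.takeUntil x hx).support ↔ p.support.idxOf v ≤ p.support.idxOf x := by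
  constructor
  · intro h
    have h2 := indexOf_mem_takeUntil hp hx h
    have h3 : (p.takeUntil x hx).support.idxOf v < (p.takeUntil x hx).support.length :=
      List.idxOf_lt_length_iff.mpr h
    have h4 : (p.takeUntil x hx).support.length = (p.takeUntil x hx).length + 1 :=
      (p.takeUntil x hx).length_support
    have h5 : p.support.idxOf x = (p.takeUntil x hx).length := indexOf_takeUntil_length hp hx
    omega
  · intro h
    have hsplit : p.support = (p.takeUntil x hx).support ++ (p.dropUntil x hx).support.tail := by
      have := Walk.support_append (p.takeUntil x hx) (p.dropUntil x hx)
      rwa [Walk.take_spec] at this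
    have hv' := hv
    rw [hsplit, List.mem_append] at hv'
    rcases hv' with h1 | h1
    · exact h1
    · exfalso
      have h2 : v ∈ (p.dropUntil x hx).support := by
        rw [(p.dropUntil x hx).support_eq_cons]; exact List.mem_cons.mpr (Or.inr h1)
      have h3 := indexOf_mem_dropUntil hp hx h2
      have hvx : v ≠ x := by
        intro hvx
        subst hvx
        have hnodup : p.support.Nodup := hp.support_nodup
        rw [hsplit] at hnodup
        rcases List.nodup_append.mp hnodup with ⟨-, -, hd⟩
        exact hd _ (p.takeUntil v hx).end_mem_support _ h1 rfl
      have h4 : (p.dropUntil x hx).support.idxOf v ≠ 0 := by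
        intro h0
        have : v ∈ (p.dropUntil x hx).support := h2
        have h5 := (p.dropUntil x hx).support_eq_cons
        rw [h5] at h0
        rcases eq_or_ne v x with h6 | h6
        · exact hvx h6
        · rw [List.idxOf_cons_ne _ (fun hh => h6 hh.symm)] at h0
          exact Nat.succ_ne_zero _ h0
      omega

private lemma indexOf_lt_of_mem_tail_dropUntil {a b x v : V} {p : G.Walk a b} (hp : p.IsPath)
    (hx : x ∈ p.support) (hv : v ∈ (p.dropUntil x hx).support) (hvx : v ≠ x) :
    p.support.idxOf x < p.support.idxOf v := by
  have h := indexOf_mem_dropUntil hp hx hv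
  have h4 : (p.dropUntil x hx).support.idxOf v ≠ 0 := by
    intro h0
    rw [(p.dropUntil x hx).support_eq_cons, List.idxOf_cons_ne _ (fun hh => hvx hh.symm)] at h0
    exact Nat.succ_ne_zero _ h0
  omega

private lemma indexOf_end_eq_length {a b : V} {p : G.Walk a b} (hp : p.IsPath) :
    p.support.idxOf b = p.length := indexOf_end hp

private lemma indexOf_le_length {a b v : V} {p : G.Walk a b} (hv : v ∈ p.support) :
    p.support.idxOf v ≤ p.length := by
  have h := List.idxOf_lt_length_iff.mpr hv
  have h2 := p.length_support
  omega

private lemma exchange {u w a b : V} {P Q : G.Walk u w} (hP : P.IsPath) (hQ : Q.IsPath)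
    (hdisj : ∀ e ∈ P.edges, e ∉ Q.edges)
    (hmin : ∀ p q : G.Walk u w, (∀ e ∈ p.edges, e ∉ q.edges) →
      P.length + Q.length ≤ p.length + q.length)
    (haP : a ∈ P.support) (hbP : b ∈ P.support) (haQ : a ∈ Q.support) (hbQ : b ∈ Q.support)
    (hab : P.support.idxOf a < P.support.idxOf b) :
    Q.support.idxOf a < Q.support.idxOf b := by
  have hne : a ≠ b := by
    intro h; subst h; omega
  by_contra hcon
  push_neg at hcon
  -- hcon : iQ b ≤ iQ a
  have hbD : b ∈ (P.dropUntil a haP).support :=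
    (mem_dropUntil_iff_le_indexOf hP haP hbP).mpr (le_of_lt hab)
  have haE : a ∈ (Q.dropUntil b hbQ).support :=
    (mem_dropUntil_iff_le_indexOf hQ hbQ haQ).mpr hcon
  set A1 := P.takeUntil a haP with hA1
  set D := P.dropUntil a haP with hD
  set D1 := D.takeUntil b hbD with hD1
  set D2 := D.dropUntil b hbD with hD2
  set B1 := Q.takeUntil b hbQ with hB1
  set E := Q.dropUntil b hbQ with hE
  set E1 := E.takeUntil a haE with hE1
  set E2 := E.dropUntil a haE with hE2
  have hPeq : A1.append (D1.append D2) = P := by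
    rw [Walk.take_spec D hbD]; exact Walk.take_spec P haP
  have hQeq : B1.append (E1.append E2) = Q := by
    rw [Walk.take_spec E haE]; exact Walk.take_spec Q hbQ
  have hPedges : P.edges = A1.edges ++ (D1.edges ++ D2.edges) := by
    rw [← hPeq, Walk.edges_append, Walk.edges_append]
  have hQedges : Q.edges = B1.edges ++ (E1.edges ++ E2.edges) := by
    rw [← hQeq, Walk.edges_append, Walk.edges_append]
  have hPnodup := hP.isTrail.edges_nodup
  have hQnodup := hQ.isTrail.edges_nodup
  rw [hPedges, List.nodup_append] at hPnodup
  rw [hQedges, List.nodup_append] at hQnodup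
  have hAD2 : ∀ e ∈ A1.edges, e ∉ D2.edges := by
    intro e he he2
    exact hPnodup.2.2 _ he _ (List.mem_append.mpr (Or.inr he2)) rfl
  have hBE2 : ∀ e ∈ E2.edges, e ∉ B1.edges := by
    intro e he he2
    exact hQnodup.2.2 _ he2 _ (List.mem_append.mpr (Or.inr he)) rfl
  have hdisjW : ∀ e ∈ (A1.append E2).edges, e ∉ (B1.append D2).edges := by
    intro e he he2
    rw [Walk.edges_append, List.mem_append] at he he2
    rcases he with he | he
    · rcases he2 with he2 | he2
      · exact hdisj e (hPedges ▸ List.mem_append.mpr (Or.inl he))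
          (hQedges ▸ List.mem_append.mpr (Or.inl he2))
      · exact hAD2 e he he2
    · rcases he2 with he2 | he2
      · exact hBE2 e he he2
      · exact hdisj e (hPedges ▸ List.mem_append.mpr (Or.inr (List.mem_append.mpr (Or.inr he2))))
          (hQedges ▸ List.mem_append.mpr (Or.inr (List.mem_append.mpr (Or.inr he))))
  have hminW := hmin (A1.append E2) (B1.append D2) hdisjW
  have hPlen : P.length = A1.length + (D1.length + D2.length) := by
    rw [← hPeq, Walk.length_append, Walk.length_append]
  have hQlen : Q.length = B1.length + (E1.length + E2.length) := by
    rw [← hQeq, Walk.length_append, Walk.length_append]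
  have hW1len : (A1.append E2).length = A1.length + E2.length := Walk.length_append _ _
  have hW2len : (B1.append D2).length = B1.length + D2.length := Walk.length_append _ _
  have hD1pos : 0 < D1.length := by
    rcases Nat.eq_zero_or_pos D1.length with h0 | h; swap; exact h
    exact absurd (D1.eq_of_length_eq_zero h0) hne
  have hE1pos : 0 < E1.length := by
    rcases Nat.eq_zero_or_pos E1.length with h0 | h; swap; exact h
    exact absurd (E1.eq_of_length_eq_zero h0).symm hne
  omega

private lemma edges_of_length_one {x y : V} (p : G.Walk x y) (h : p.length = 1) :
    s(x, y) ∈ p.edges := by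
  cases p with
  | nil => simp at h
  | cons hadj q =>
    have hq : q.length = 0 := by simpa using h
    have := q.eq_of_length_eq_zero hq
    subst this
    simp

private lemma second_vertex {x y : V} (p : G.Walk x y) (h2 : 2 ≤ p.length) :
    ∃ g, g ∈ p.support ∧ 0 < p.support.idxOf g ∧ p.support.idxOf g < p.length := by
  cases p with
  | nil => simp at h2
  | @cons _ c _ hadj q =>
    refine ⟨c, by simp, ?_, ?_⟩
    · rw [Walk.support_cons, List.idxOf_cons_ne _ (G.ne_of_adj hadj)]
      exact Nat.succ_pos _
    · rw [Walk.support_cons, List.idxOf_cons_ne _ (G.ne_of_adj hadj)]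
      rw [q.support_eq_cons, List.idxOf_cons_self]
      simp only [Walk.length_cons] at h2 ⊢
      omega

private lemma between_vertex {a b x y : V} {p : G.Walk a b} (hp : p.IsPath)
    (hx : x ∈ p.support) (hy : y ∈ p.support)
    (hxy : p.support.idxOf x < p.support.idxOf y)
    (hlen : 2 ≤ ((p.dropUntil x hx).takeUntil y
      ((mem_dropUntil_iff_le_indexOf hp hx hy).mpr (le_of_lt hxy))).length) :
    ∃ g, g ∈ p.support ∧ p.support.idxOf x < p.support.idxOf g ∧
      p.support.idxOf g < p.support.idxOf y := by
  have hyD : y ∈ (p.dropUntil x hx).support :=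
    (mem_dropUntil_iff_le_indexOf hp hx hy).mpr (le_of_lt hxy)
  set D := p.dropUntil x hx with hDdef
  set Gp := D.takeUntil y hyD with hGpdef
  have hDpath : D.IsPath := hp.dropUntil hx
  obtain ⟨g, hgGp, hg0, hglen⟩ := second_vertex Gp hlen
  have hgD : g ∈ D.support := D.support_takeUntil_subset hyD hgGp
  have h1 : D.support.idxOf g = Gp.support.idxOf g := indexOf_mem_takeUntil hDpath hyD hgGp
  have h2 : D.support.idxOf y = Gp.length := indexOf_takeUntil_length hDpath hyD
  have h3 : p.support.idxOf g = p.support.idxOf x + D.support.idxOf g :=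
    indexOf_mem_dropUntil hp hx hgD
  have h4 : p.support.idxOf y = p.support.idxOf x + D.support.idxOf y :=
    indexOf_mem_dropUntil hp hx hyD
  exact ⟨g, p.support_dropUntil_subset hx hgD, by omega, by omega⟩

private lemma gap_vertex {u w x y : V} {P Q : G.Walk u w} (hP : P.IsPath) (hQ : Q.IsPath)
    (hdisj : ∀ e ∈ P.edges, e ∉ Q.edges)
    (hxP : x ∈ P.support) (hyP : y ∈ P.support) (hxQ : x ∈ Q.support) (hyQ : y ∈ Q.support)
    (hxyP : P.support.idxOf x < P.support.idxOf y)
    (hxyQ : Q.support.idxOf x < Q.support.idxOf y) :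
    (∃ g, g ∈ P.support ∧ P.support.idxOf x < P.support.idxOf g ∧
        P.support.idxOf g < P.support.idxOf y) ∨
    (∃ g, g ∈ Q.support ∧ Q.support.idxOf x < Q.support.idxOf g ∧
        Q.support.idxOf g < Q.support.idxOf y) := by
  have hyDP : y ∈ (P.dropUntil x hxP).support :=
    (mem_dropUntil_iff_le_indexOf hP hxP hyP).mpr (le_of_lt hxyP)
  have hyDQ : y ∈ (Q.dropUntil x hxQ).support :=
    (mem_dropUntil_iff_le_indexOf hQ hxQ hyQ).mpr (le_of_lt hxyQ)
  set GP := (P.dropUntil x hxP).takeUntil y hyDP with hGP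
  set GQ := (Q.dropUntil x hxQ).takeUntil y hyDQ with hGQ
  have hxny : x ≠ y := fun h => by subst h; omega
  have hGPpos : 0 < GP.length := by
    rcases Nat.eq_zero_or_pos GP.length with h0 | h; swap; exact h
    exact absurd (GP.eq_of_length_eq_zero h0) hxny
  have hGQpos : 0 < GQ.length := by
    rcases Nat.eq_zero_or_pos GQ.length with h0 | h; swap; exact h
    exact absurd (GQ.eq_of_length_eq_zero h0) hxny
  by_cases hGP2 : 2 ≤ GP.length
  · exact Or.inl (between_vertex hP hxP hyP hxyP hGP2)
  · by_cases hGQ2 : 2 ≤ GQ.length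
    · exact Or.inr (between_vertex hQ hxQ hyQ hxyQ hGQ2)
    · exfalso
      have hGP1 : GP.length = 1 := by omega
      have hGQ1 : GQ.length = 1 := by omega
      have heP : s(x, y) ∈ P.edges :=
        (P.edges_dropUntil_subset hxP)
          ((P.dropUntil x hxP).edges_takeUntil_subset hyDP (edges_of_length_one GP hGP1))
      have heQ : s(x, y) ∈ Q.edges :=
        (Q.edges_dropUntil_subset hxQ)
          ((Q.dropUntil x hxQ).edges_takeUntil_subset hyDQ (edges_of_length_one GQ hGQ1))
      exact hdisj _ heP heQ

private lemma core_bound [Fintype V] {u w : V} {P Q : G.Walk u w}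
    (hP : P.IsPath) (hQ : Q.IsPath) (hdisj : ∀ e ∈ P.edges, e ∉ Q.edges)
    (hmin : ∀ p q : G.Walk u w, (∀ e ∈ p.edges, e ∉ q.edges) →
      P.length + Q.length ≤ p.length + q.length) :
    2 * (P.length + Q.length) ≤ 3 * (Fintype.card V - 1) := by
  classical
  set iP : V → ℕ := fun v => P.support.idxOf v with hiP
  set iQ : V → ℕ := fun v => Q.support.idxOf v with hiQ
  set SP := P.support.toFinset with hSP
  set SQ := Q.support.toFinset with hSQ
  set X := SP ∩ SQ with hX
  set U := SP ∪ SQ with hU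
  have hmemX : ∀ {z : V}, z ∈ X → z ∈ P.support ∧ z ∈ Q.support := by
    intro z hz
    rw [hX, Finset.mem_inter, hSP, hSQ, List.mem_toFinset, List.mem_toFinset] at hz
    exact hz
  have hdisj' : ∀ e ∈ Q.edges, e ∉ P.edges := fun e he he2 => hdisj e he2 he
  have hmin' : ∀ p q : G.Walk u w, (∀ e ∈ p.edges, e ∉ q.edges) →
      Q.length + P.length ≤ p.length + q.length := by
    intro p q h
    have h2 := hmin q p (fun e he he2 => h e he2 he)
    omega
  have horder : ∀ a ∈ X, ∀ b ∈ X, iP a < iP b → iQ a < iQ b := by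
    intro a ha b hb hab
    obtain ⟨haP, haQ⟩ := hmemX ha
    obtain ⟨hbP, hbQ⟩ := hmemX hb
    exact exchange hP hQ hdisj hmin haP hbP haQ hbQ hab
  have horder' : ∀ a ∈ X, ∀ b ∈ X, iQ a < iQ b → iP a < iP b := by
    intro a ha b hb hab
    obtain ⟨haP, haQ⟩ := hmemX ha
    obtain ⟨hbP, hbQ⟩ := hmemX hb
    exact exchange hQ hP hdisj' hmin' haQ hbQ haP hbP hab
  have hwX : w ∈ X := by
    rw [hX, Finset.mem_inter, hSP, hSQ, List.mem_toFinset, List.mem_toFinset]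
    exact ⟨P.end_mem_support, Q.end_mem_support⟩
  have huX : u ∈ X := by
    rw [hX, Finset.mem_inter, hSP, hSQ, List.mem_toFinset, List.mem_toFinset]
    exact ⟨P.start_mem_support, Q.start_mem_support⟩
  have key : ∀ x ∈ X.erase w, ∃ g, g ∈ U \ X ∧
      ((g ∈ SP ∧ iP x < iP g ∧ ∀ z ∈ X, iP x < iP z → iP g < iP z) ∨
       (g ∈ SQ ∧ iQ x < iQ g ∧ ∀ z ∈ X, iQ x < iQ z → iQ g < iQ z)) := by
    intro x hx
    have hxw : x ≠ w := Finset.ne_of_mem_erase hx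
    have hxX : x ∈ X := Finset.mem_of_mem_erase hx
    obtain ⟨hxP, hxQ⟩ := hmemX hxX
    -- successor
    have hwY : w ∈ X.filter (fun z => iP x < iP z) := by
      rw [Finset.mem_filter]
      refine ⟨hwX, ?_⟩
      have h1 : iP w = P.length := indexOf_end hP
      have h2 : iP x < P.support.length := List.idxOf_lt_length_iff.mpr hxP
      have h3 : P.support.length = P.length + 1 := P.length_support
      have h4 : iP x ≠ iP w := fun h =>
        hxw ((List.idxOf_inj hxP).mp h)
      omega
    obtain ⟨y, hyY, hymin⟩ :=
      (X.filter (fun z => iP x < iP z)).exists_min_image iP ⟨w, hwY⟩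
    rw [Finset.mem_filter] at hyY
    obtain ⟨hyX, hxy⟩ := hyY
    obtain ⟨hyP, hyQ⟩ := hmemX hyX
    have hymin' : ∀ z ∈ X, iP x < iP z → iP y ≤ iP z := by
      intro z hz hz2
      exact hymin z (Finset.mem_filter.mpr ⟨hz, hz2⟩)
    have hxyQ : iQ x < iQ y := horder x hxX y hyX hxy
    rcases gap_vertex hP hQ hdisj hxP hyP hxQ hyQ hxy hxyQ with ⟨g, hgP, hg1, hg2⟩ | ⟨g, hgQ, hg1, hg2⟩
    · replace hg1 : iP x < iP g := hg1
      replace hg2 : iP g < iP y := hg2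
      have hgSP : g ∈ SP := by rw [hSP, List.mem_toFinset]; exact hgP
      have hgX : g ∉ X := by
        intro hgX
        have := hymin' g hgX hg1
        omega
      refine ⟨g, Finset.mem_sdiff.mpr ⟨Finset.mem_union_left _ hgSP, hgX⟩, Or.inl ⟨hgSP, hg1, ?_⟩⟩
      intro z hz hz2
      have := hymin' z hz hz2
      omega
    · replace hg1 : iQ x < iQ g := hg1
      replace hg2 : iQ g < iQ y := hg2
      have hgSQ : g ∈ SQ := by rw [hSQ, List.mem_toFinset]; exact hgQ
      have hgX : g ∉ X := by
        intro hgX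
        have h5 := horder' x hxX g hgX hg1
        have h5b := hymin' g hgX h5
        rcases eq_or_ne g y with rfl | hgy
        · omega
        · have h5c : iP y < iP g ∨ iP y = iP g := by omega
          rcases h5c with h5c | h5c
          · have h6 := horder y hyX g hgX h5c
            omega
          · exact hgy (((List.idxOf_inj (hmemX hgX).1).mp h5c.symm))
      refine ⟨g, Finset.mem_sdiff.mpr ⟨Finset.mem_union_right _ hgSQ, hgX⟩, Or.inr ⟨hgSQ, hg1, ?_⟩⟩
      intro z hz hz2
      have h5 := horder' x hxX z hz hz2
      have h6 := hymin' z hz h5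
      rcases eq_or_ne y z with rfl | hyz
      · omega
      · have h7 : iP y < iP z := by
          have h8 : iP y ≠ iP z := fun h => hyz ((List.idxOf_inj hyP).mp h)
          omega
        have h9 := horder y hyX z hz h7
        omega
  -- build injection
  choose gfun hgmem hgspec using key
  set f : V → V := fun x => if h : x ∈ X.erase w then gfun x h else x with hf
  have hmaps : ∀ a ∈ X.erase w, f a ∈ U \ X := by
    intro a ha
    rw [hf]
    simp only [dif_pos ha]
    exact hgmem a ha
  have hinj : ∀ a ∈ X.erase w, ∀ b ∈ X.erase w, f a = f b → a = b := by
    intro a ha' b hb' hab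
    rw [hf] at hab
    simp only [dif_pos ha', dif_pos hb'] at hab
    by_contra hne
    have haX : a ∈ X := Finset.mem_of_mem_erase ha'
    have hbX : b ∈ X := Finset.mem_of_mem_erase hb'
    obtain ⟨haP, haQ⟩ := hmemX haX
    obtain ⟨hbP, hbQ⟩ := hmemX hbX
    rcases hgspec a ha' with ⟨hg1, hg2, hg3⟩ | ⟨hg1, hg2, hg3⟩ <;>
      rcases hgspec b hb' with ⟨hh1, hh2, hh3⟩ | ⟨hh1, hh2, hh3⟩
    · -- both P side
      have hne2 : iP a ≠ iP b := fun h => hne ((List.idxOf_inj haP).mp h)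
      rcases Nat.lt_or_ge (iP a) (iP b) with h | h
      · have := hg3 b hbX h
        rw [hab] at hg2 this
        omega
      · have h2 : iP b < iP a := by omega
        have := hh3 a haX h2
        rw [hab] at hg2
        omega
    · -- mixed: g ∈ SP (from a, P-side)... need contradiction g ∈ X
      have hgmem_a := hgmem a ha'
      rw [hab] at hg1
      have : gfun b hb' ∈ X := by
        rw [hX, Finset.mem_inter]
        exact ⟨hg1, hh1⟩
      have h2 := hgmem b hb'
      rw [Finset.mem_sdiff] at h2
      exact h2.2 this
    · have hgmem_a := hgmem a ha'
      rw [hab] at hg1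
      have : gfun b hb' ∈ X := by
        rw [hX, Finset.mem_inter]
        exact ⟨hh1, hg1⟩
      have h2 := hgmem b hb'
      rw [Finset.mem_sdiff] at h2
      exact h2.2 this
    · -- both Q side
      have hne2 : iQ a ≠ iQ b := fun h => hne ((List.idxOf_inj haQ).mp h)
      rcases Nat.lt_or_ge (iQ a) (iQ b) with h | h
      · have := hg3 b hbX h
        rw [hab] at hg2 this
        omega
      · have h2 : iQ b < iQ a := by omega
        have := hh3 a haX h2
        rw [hab] at hg2
        omega
  have hcard1 : (X.erase w).card ≤ (U \ X).card := by
    apply Finset.card_le_card_of_injOn f (fun a ha => hmaps a ha)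
    intro a ha b hb hab
    exact hinj a (Finset.mem_coe.mp ha) b (Finset.mem_coe.mp hb) hab
  have hcard2 : (X.erase w).card = X.card - 1 := Finset.card_erase_of_mem hwX
  have hXU : X ⊆ U := Finset.inter_subset_union
  have hcard3 : (U \ X).card = U.card - X.card := Finset.card_sdiff_of_subset hXU
  have hcard4 : U.card + X.card = SP.card + SQ.card := Finset.card_union_add_card_inter SP SQ
  have hcard5 : SP.card = P.length + 1 := by
    rw [hSP, List.toFinset_card_of_nodup hP.support_nodup, P.length_support]
  have hcard6 : SQ.card = Q.length + 1 := by
    rw [hSQ, List.toFinset_card_of_nodup hQ.support_nodup, Q.length_support]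
  have hcard7 : U.card ≤ Fintype.card V := by
    rw [← Finset.card_univ]
    exact Finset.card_le_univ U
  have hcard8 : 1 ≤ X.card := Finset.card_pos.mpr ⟨u, huX⟩
  have hcard9 : X.card ≤ U.card := Finset.card_le_card hXU
  omega

end Helpers

theorem two_edge_disjoint_paths {V : Type*} [Finite V] (G : SimpleGraph V)
    (hconn : G.Connected) (hn : 3 ≤ Nat.card V)
    (hbridgeless : ∀ u v : V, ¬ G.IsBridge s(u, v)) (u w : V) :
    ∃ P P' : G.Walk u w, P.IsPath ∧ P'.IsPath ∧
      (∀ e, e ∈ P.edges → e ∉ P'.edges) ∧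
      2 * Nat.card {e : Sym2 V // e ∈ P.edges ∨ e ∈ P'.edges} ≤ 3 * (Nat.card V - 1) := by
  classical
  have hfin : Fintype V := Fintype.ofFinite V
  have hreach : G.Reachable u w := hconn.preconnected u w
  obtain ⟨p0, q0, hdisj0⟩ := exists_two_disjoint_walks hbridgeless hreach
  set A : Set ℕ := {m | ∃ p q : G.Walk u w, (∀ e ∈ p.edges, e ∉ q.edges) ∧ p.length + q.length = m}
    with hA
  have hAne : A.Nonempty := ⟨p0.length + q0.length, p0, q0, hdisj0, rfl⟩
  have hmin0 : ∀ p q : G.Walk u w, (∀ e ∈ p.edges, e ∉ q.edges) → sInf A ≤ p.length + q.length :=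
    fun p q h => Nat.sInf_le ⟨p, q, h, rfl⟩
  obtain ⟨p1, q1, hdisj1, hlen1⟩ := Nat.sInf_mem hAne
  set P := p1.bypass with hPdef
  set Q := q1.bypass with hQdef
  have hP : P.IsPath := p1.bypass_isPath
  have hQ : Q.IsPath := q1.bypass_isPath
  have hdisjPQ : ∀ e ∈ P.edges, e ∉ Q.edges := fun e he he2 =>
    hdisj1 e (p1.edges_bypass_subset he) (q1.edges_bypass_subset he2)
  have hlenPQ : P.length + Q.length = sInf A := by
    have h1 : P.length ≤ p1.length := p1.length_bypass_le
    have h2 : Q.length ≤ q1.length := q1.length_bypass_le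
    have h3 := hmin0 P Q hdisjPQ
    omega
  have hmin : ∀ p q : G.Walk u w, (∀ e ∈ p.edges, e ∉ q.edges) →
      P.length + Q.length ≤ p.length + q.length := by
    intro p q h
    rw [hlenPQ]
    exact hmin0 p q h
  have hbound := core_bound hP hQ hdisjPQ hmin
  refine ⟨P, Q, hP, hQ, hdisjPQ, ?_⟩
  have hedisj : Disjoint P.edges.toFinset Q.edges.toFinset := by
    rw [Finset.disjoint_left]
    intro e he he2
    rw [List.mem_toFinset] at he he2
    exact hdisjPQ e he he2
  have hcard : Nat.card {e : Sym2 V // e ∈ P.edges ∨ e ∈ Q.edges} = P.length + Q.length := by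
    have hequiv : {e : Sym2 V // e ∈ P.edges ∨ e ∈ Q.edges} ≃
        {e : Sym2 V // e ∈ P.edges.toFinset ∪ Q.edges.toFinset} :=
      Equiv.subtypeEquivRight (fun e => by
        rw [Finset.mem_union, List.mem_toFinset, List.mem_toFinset])
    rw [Nat.card_congr hequiv, Nat.card_eq_fintype_card, Fintype.card_coe,
      Finset.card_union_of_disjoint hedisj,
      List.toFinset_card_of_nodup hP.isTrail.edges_nodup,
      List.toFinset_card_of_nodup hQ.isTrail.edges_nodup,
      P.length_edges, Q.length_edges]
  rw [hcard, Nat.card_eq_fintype_card]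
  exact hbound
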